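/- arXiv:2211.17047 — 3 statements merged into one kernel-verified Lean document; each statement's English description precedes it below -/
import Mathlib

section
/- Let N≥3 be an integer, s∈(0,2) and λ₁,λ₂∈(0,Λ_N). Then the inequalities 2𝔠(λ₂,s)>𝔠(λ₁,s)>𝔠(λ₂,s) hold if and only if λ₂>λ₁ and (Λ_N−λ₂)/(Λ_N−λ₁) > 2^{−2(2−s)/(2(N−1)−s)}. -/
open MeasureTheory Filter Metric
open scoped RealInnerProductSpace ENNReal Topology

noncomputable section

abbrev Eucl (N : ℕ) : Type := EuclideanSpace ℝ (Fin N)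

def lamN (N : ℕ) : ℝ := ((N : ℝ) - 2) ^ 2 / 4

def twoStar (N : ℕ) (s : ℝ) : ℝ := 2 * ((N : ℝ) - s) / ((N : ℝ) - 2)

/-- An element of `D^{1,2}(ℝ^N)`: a function in `L^{2N/(N-2)}` together with its
weak gradient, which lies in `L²`. -/
structure D12 (N : ℕ) where
  u : Eucl N → ℝ
  grad : Eucl N → Eucl N
  u_memLp : MemLp u (ENNReal.ofReal (2 * N / ((N : ℝ) - 2))) volume
  grad_memLp : MemLp grad 2 volume
  weak_grad : ∀ (i : Fin N) (φ : Eucl N → ℝ), ContDiff ℝ (⊤ : ℕ∞) φ → HasCompactSupport φ →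
    ∫ x, u x * fderiv ℝ φ x (EuclideanSpace.single i 1) = - ∫ x, grad x i * φ x

def IsTest (N : ℕ) (φ : Eucl N → ℝ) : Prop :=
  ContDiff ℝ (⊤ : ℕ∞) φ ∧ HasCompactSupport φ

def normLamSq (N : ℕ) (lam : ℝ) (f : D12 N) : ℝ :=
  (∫ x, ‖f.grad x‖ ^ 2) - lam * ∫ x, (f.u x) ^ 2 / ‖x‖ ^ 2

def normDSq (N : ℕ) (lam1 lam2 : ℝ) (p : D12 N × D12 N) : ℝ :=
  normLamSq N lam1 p.1 + normLamSq N lam2 p.2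

def diffNormDSq (N : ℕ) (lam1 lam2 : ℝ) (p q : D12 N × D12 N) : ℝ :=
  ((∫ x, ‖p.1.grad x - q.1.grad x‖ ^ 2) - lam1 * ∫ x, (p.1.u x - q.1.u x) ^ 2 / ‖x‖ ^ 2)
    + ((∫ x, ‖p.2.grad x - q.2.grad x‖ ^ 2) - lam2 * ∫ x, (p.2.u x - q.2.u x) ^ 2 / ‖x‖ ^ 2)

def critInt (N : ℕ) (s : ℝ) (f : D12 N) : ℝ :=
  ∫ x, |f.u x| ^ (twoStar N s) / ‖x‖ ^ s

def couplingInt (N : ℕ) (s α β : ℝ) (h : Eucl N → ℝ) (p : D12 N × D12 N) : ℝ :=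
  ∫ x, h x * |p.1.u x| ^ α * |p.2.u x| ^ β / ‖x‖ ^ s

/-- The energy functional `J_ν`. -/
def Jnu (N : ℕ) (s lam1 lam2 α β ν : ℝ) (h : Eucl N → ℝ) (p : D12 N × D12 N) : ℝ :=
  (1 / 2) * normDSq N lam1 lam2 p
    - (1 / twoStar N s) * (critInt N s p.1 + critInt N s p.2)
    - ν * couplingInt N s α β h p

/-- The pairing `⟨J_ν'(u,v),(φ,ψ)⟩`. -/
def pairing (N : ℕ) (s lam1 lam2 α β ν : ℝ) (h : Eucl N → ℝ) (p : D12 N × D12 N)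
    (φ ψ : Eucl N → ℝ) : ℝ :=
  (∫ x, (⟪p.1.grad x, gradient φ x⟫ + ⟪p.2.grad x, gradient ψ x⟫))
    - lam1 * ∫ x, p.1.u x * φ x / ‖x‖ ^ 2
    - lam2 * ∫ x, p.2.u x * ψ x / ‖x‖ ^ 2
    - ∫ x, (|p.1.u x| ^ (twoStar N s - 2) * p.1.u x * φ x
        + |p.2.u x| ^ (twoStar N s - 2) * p.2.u x * ψ x) / ‖x‖ ^ s
    - ν * ∫ x, h x * (α * |p.1.u x| ^ (α - 2) * p.1.u x * |p.2.u x| ^ β * φ x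
        + β * |p.1.u x| ^ α * |p.2.u x| ^ (β - 2) * p.2.u x * ψ x) / ‖x‖ ^ s

def IsCritical (N : ℕ) (s lam1 lam2 α β ν : ℝ) (h : Eucl N → ℝ) (p : D12 N × D12 N) : Prop :=
  ∀ φ ψ : Eucl N → ℝ, IsTest N φ → IsTest N ψ → pairing N s lam1 lam2 α β ν h p φ ψ = 0

def Nontriv (N : ℕ) (p : D12 N × D12 N) : Prop :=
  ¬ (p.1.u =ᵐ[volume] (fun _ => (0 : ℝ)) ∧ p.2.u =ᵐ[volume] (fun _ => (0 : ℝ)))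

/-- Ground state: nontrivial nonnegative critical point of minimal energy among all
nontrivial nonnegative critical points. -/
def IsGroundState (N : ℕ) (s lam1 lam2 α β ν : ℝ) (h : Eucl N → ℝ) (p : D12 N × D12 N) : Prop :=
  IsCritical N s lam1 lam2 α β ν h p ∧ Nontriv N p ∧
    (∀ᵐ x ∂volume, 0 ≤ p.1.u x) ∧ (∀ᵐ x ∂volume, 0 ≤ p.2.u x) ∧
    ∀ q : D12 N × D12 N, IsCritical N s lam1 lam2 α β ν h q → Nontriv N q →
      (∀ᵐ x ∂volume, 0 ≤ q.1.u x) → (∀ᵐ x ∂volume, 0 ≤ q.2.u x) →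
      Jnu N s lam1 lam2 α β ν h p ≤ Jnu N s lam1 lam2 α β ν h q

def IsPositiveGroundState (N : ℕ) (s lam1 lam2 α β ν : ℝ) (h : Eucl N → ℝ)
    (p : D12 N × D12 N) : Prop :=
  IsGroundState N s lam1 lam2 α β ν h p ∧
    (∀ᵐ x ∂volume, 0 < p.1.u x) ∧ (∀ᵐ x ∂volume, 0 < p.2.u x)

/-- `h ∈ L^∞(ℝ^N)`, `h ≥ 0`, `h ≢ 0`. -/
def Hadm (N : ℕ) (h : Eucl N → ℝ) : Prop :=
  Measurable h ∧ (∀ x, 0 ≤ h x) ∧ (∃ C : ℝ, ∀ x, h x ≤ C) ∧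
    ¬ (h =ᵐ[volume] (fun _ => (0 : ℝ)))

/-- Hypothesis (H). -/
def HypH (N : ℕ) (h : Eucl N → ℝ) : Prop :=
  (∃ ε > (0 : ℝ), ContinuousOn h (ball (0 : Eucl N) ε)) ∧
    (∃ R : ℝ, ContinuousOn h {x : Eucl N | R ≤ ‖x‖}) ∧
    h 0 = 0 ∧ Tendsto h (cocompact (Eucl N)) (𝓝 0)

def Sconst (N : ℕ) (lam s : ℝ) : ℝ :=
  4 * (lamN N - lam) * (((N : ℝ) - s) / ((N : ℝ) - 2)) *
    ((((N : ℝ) - 2) / (2 * (2 - s) * Real.sqrt (lamN N - lam)))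
        * (2 * Real.pi ^ ((N : ℝ) / 2) / Real.Gamma ((N : ℝ) / 2))
        * (Real.Gamma (((N : ℝ) - s) / (2 - s)) ^ 2 / Real.Gamma (2 * ((N : ℝ) - s) / (2 - s))))
      ^ ((2 - s) / ((N : ℝ) - s))

def cLevel (N : ℕ) (lam s : ℝ) : ℝ :=
  ((2 - s) / (2 * ((N : ℝ) - s))) * Sconst N lam s ^ (((N : ℝ) - s) / (2 - s))

def aLam (N : ℕ) (lam : ℝ) : ℝ := Real.sqrt (lamN N) - Real.sqrt (lamN N - lam)

def Aconst (N : ℕ) (s lam : ℝ) : ℝ := 2 * (lamN N - lam) * (((N : ℝ) - s) / Real.sqrt (lamN N))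

def z1 (N : ℕ) (s lam : ℝ) (x : Eucl N) : ℝ :=
  Aconst N s lam ^ (((N : ℝ) - 2) / (2 * (2 - s))) /
    (‖x‖ ^ (aLam N lam) *
      (1 + ‖x‖ ^ ((2 - s) * (1 - 2 * aLam N lam / ((N : ℝ) - 2)))) ^ (((N : ℝ) - 2) / (2 - s)))

def zMu (N : ℕ) (s lam μ : ℝ) (x : Eucl N) : ℝ :=
  μ ^ (-(((N : ℝ) - 2) / 2)) * z1 N s lam (μ⁻¹ • x)

def TestNormSq (N : ℕ) (lam1 lam2 : ℝ) (φ ψ : Eucl N → ℝ) : ℝ :=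
  ((∫ x, ‖gradient φ x‖ ^ 2) - lam1 * ∫ x, (φ x) ^ 2 / ‖x‖ ^ 2)
    + ((∫ x, ‖gradient ψ x‖ ^ 2) - lam2 * ∫ x, (ψ x) ^ 2 / ‖x‖ ^ 2)

/-- Palais–Smale sequence for `J_ν` at level `c`. -/
def IsPSSeq (N : ℕ) (s lam1 lam2 α β ν : ℝ) (h : Eucl N → ℝ)
    (seq : ℕ → D12 N × D12 N) (c : ℝ) : Prop :=
  Tendsto (fun n => Jnu N s lam1 lam2 α β ν h (seq n)) atTop (𝓝 c) ∧
    ∀ δ : ℝ, 0 < δ → ∀ᶠ n in atTop, ∀ φ ψ : Eucl N → ℝ, IsTest N φ → IsTest N ψ →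
      TestNormSq N lam1 lam2 φ ψ ≤ 1 → |pairing N s lam1 lam2 α β ν h (seq n) φ ψ| ≤ δ

/-- Strong convergence (of a subsequence handled outside) in `𝔻`. -/
def TendstoD (N : ℕ) (lam1 lam2 : ℝ) (seq : ℕ → D12 N × D12 N) (p : D12 N × D12 N) : Prop :=
  Tendsto (fun n => diffNormDSq N lam1 lam2 (seq n) p) atTop (𝓝 0)


private lemma cLevel_formula (N : ℕ) (hN : 3 ≤ N) (s : ℝ) (hs0 : 0 < s) (hs2 : s < 2) :
    ∃ E : ℝ, 0 < E ∧ ∀ lam : ℝ, 0 < lam → lam < lamN N →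
      cLevel N lam s =
        E * (lamN N - lam) ^ ((2 * ((N : ℝ) - 1) - s) / (2 * (2 - s))) := by
  have hn : (3 : ℝ) ≤ (N : ℝ) := by exact_mod_cast hN
  have hn2 : (0 : ℝ) < (N : ℝ) - 2 := by linarith
  have h2s : (0 : ℝ) < 2 - s := by linarith
  have hns : (0 : ℝ) < (N : ℝ) - s := by linarith
  have hG1 : 0 < Real.Gamma ((N : ℝ) / 2) := Real.Gamma_pos_of_pos (by linarith)
  have hG2 : 0 < Real.Gamma (((N : ℝ) - s) / (2 - s)) := Real.Gamma_pos_of_pos (by positivity)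
  have hG3 : 0 < Real.Gamma (2 * ((N : ℝ) - s) / (2 - s)) := Real.Gamma_pos_of_pos (by positivity)
  have hpi : (0 : ℝ) < Real.pi ^ ((N : ℝ) / 2) := Real.rpow_pos_of_pos Real.pi_pos _
  set B : ℝ := ((N : ℝ) - 2) / (2 * (2 - s)) *
      (2 * Real.pi ^ ((N : ℝ) / 2) / Real.Gamma ((N : ℝ) / 2)) *
      (Real.Gamma (((N : ℝ) - s) / (2 - s)) ^ 2 / Real.Gamma (2 * ((N : ℝ) - s) / (2 - s)))
    with hBdef
  have hB : 0 < B := by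
    refine mul_pos (mul_pos ?_ ?_) ?_
    · positivity
    · exact div_pos (by positivity) hG1
    · exact div_pos (by positivity) hG3
  have hC : (0 : ℝ) < 4 * (((N : ℝ) - s) / ((N : ℝ) - 2)) := by positivity
  refine ⟨(2 - s) / (2 * ((N : ℝ) - s)) *
      ((4 * (((N : ℝ) - s) / ((N : ℝ) - 2))) ^ (((N : ℝ) - s) / (2 - s)) * B), ?_, ?_⟩
  · exact mul_pos (by positivity) (mul_pos (Real.rpow_pos_of_pos hC _) hB)
  intro lam h0 h1
  have ht : 0 < lamN N - lam := sub_pos.2 h1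
  have hst : 0 < Real.sqrt (lamN N - lam) := Real.sqrt_pos.2 ht
  simp only [cLevel, Sconst]
  have hbr : ((N : ℝ) - 2) / (2 * (2 - s) * Real.sqrt (lamN N - lam)) *
      (2 * Real.pi ^ ((N : ℝ) / 2) / Real.Gamma ((N : ℝ) / 2)) *
      (Real.Gamma (((N : ℝ) - s) / (2 - s)) ^ 2 / Real.Gamma (2 * ((N : ℝ) - s) / (2 - s)))
      = B / Real.sqrt (lamN N - lam) := by
    rw [hBdef]
    field_simp
  rw [hbr]
  have hrearr : 4 * (lamN N - lam) * (((N : ℝ) - s) / ((N : ℝ) - 2)) *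
      (B / Real.sqrt (lamN N - lam)) ^ ((2 - s) / ((N : ℝ) - s))
      = (4 * (((N : ℝ) - s) / ((N : ℝ) - 2))) *
        (B / Real.sqrt (lamN N - lam)) ^ ((2 - s) / ((N : ℝ) - s)) * (lamN N - lam) := by
    ring
  rw [hrearr, Real.mul_rpow (by positivity) ht.le,
    Real.mul_rpow hC.le (Real.rpow_nonneg (by positivity) _),
    ← Real.rpow_mul (by positivity : (0 : ℝ) ≤ B / Real.sqrt (lamN N - lam))]
  have hqr : (2 - s) / ((N : ℝ) - s) * (((N : ℝ) - s) / (2 - s)) = 1 := by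
    field_simp
  rw [hqr, Real.rpow_one, Real.sqrt_eq_rpow,
    show (2 * ((N : ℝ) - 1) - s) / (2 * (2 - s)) = ((N : ℝ) - s) / (2 - s) - 1 / 2 by
      field_simp; ring,
    Real.rpow_sub ht]
  have h12 : (lamN N - lam) ^ ((1 : ℝ) / 2) ≠ 0 := (Real.rpow_pos_of_pos ht _).ne'
  field_simp

theorem statement5
    (N : ℕ) (hN : 3 ≤ N) (s : ℝ) (hs0 : 0 < s) (hs2 : s < 2)
    (lam1 lam2 : ℝ) (hl1 : 0 < lam1) (hl1' : lam1 < lamN N)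
    (hl2 : 0 < lam2) (hl2' : lam2 < lamN N) :
    (cLevel N lam2 s < cLevel N lam1 s ∧ cLevel N lam1 s < 2 * cLevel N lam2 s) ↔
      (lam1 < lam2 ∧
        (2 : ℝ) ^ (-(2 * (2 - s)) / (2 * ((N : ℝ) - 1) - s)) <
          (lamN N - lam2) / (lamN N - lam1)) := by
  obtain ⟨E, hE, hf⟩ := cLevel_formula N hN s hs0 hs2
  have hn : (3 : ℝ) ≤ (N : ℝ) := by exact_mod_cast hN
  have h2s : (0 : ℝ) < 2 - s := by linarith
  have hD : (0 : ℝ) < 2 * ((N : ℝ) - 1) - s := by linarith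
  set e : ℝ := (2 * ((N : ℝ) - 1) - s) / (2 * (2 - s)) with hedef
  have he : 0 < e := div_pos hD (by linarith)
  set c : ℝ := 2 * (2 - s) / (2 * ((N : ℝ) - 1) - s) with hcdef
  have hce : c * e = 1 := by
    rw [hcdef, hedef]; field_simp
  have ht1 : 0 < lamN N - lam1 := sub_pos.2 hl1'
  have ht2 : 0 < lamN N - lam2 := sub_pos.2 hl2'
  rw [hf lam1 hl1 hl1', hf lam2 hl2 hl2']
  have hnu : -(2 * (2 - s)) / (2 * ((N : ℝ) - 1) - s) = -c := by
    rw [hcdef]; ring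
  rw [hnu]
  have h2c : (0 : ℝ) < (2 : ℝ) ^ c := Real.rpow_pos_of_pos two_pos _
  have h2nc : (0 : ℝ) < (2 : ℝ) ^ (-c) := Real.rpow_pos_of_pos two_pos _
  have hcc : (2 : ℝ) ^ (-c) * (2 : ℝ) ^ c = 1 := by
    rw [← Real.rpow_add two_pos]; simp
  constructor
  · rintro ⟨h1, h2⟩
    have ht : lamN N - lam2 < lamN N - lam1 :=
      (Real.rpow_lt_rpow_iff ht2.le ht1.le he).1 ((mul_lt_mul_iff_right₀ hE).1 h1)
    refine ⟨by linarith, ?_⟩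
    have key : 2 * (E * (lamN N - lam2) ^ e) = E * (((2 : ℝ) ^ c * (lamN N - lam2)) ^ e) := by
      rw [Real.mul_rpow h2c.le ht2.le, ← Real.rpow_mul (by norm_num : (0 : ℝ) ≤ 2), hce,
        Real.rpow_one]
      ring
    rw [key, mul_lt_mul_iff_right₀ hE] at h2
    have hlt : lamN N - lam1 < (2 : ℝ) ^ c * (lamN N - lam2) :=
      (Real.rpow_lt_rpow_iff ht1.le (by positivity) he).1 h2
    rw [lt_div_iff₀ ht1]
    calc (2 : ℝ) ^ (-c) * (lamN N - lam1)
        < (2 : ℝ) ^ (-c) * ((2 : ℝ) ^ c * (lamN N - lam2)) := by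
          exact (mul_lt_mul_iff_right₀ h2nc).2 hlt
      _ = lamN N - lam2 := by rw [← mul_assoc, hcc, one_mul]
  · rintro ⟨h1, h2⟩
    have ht : lamN N - lam2 < lamN N - lam1 := by linarith
    refine ⟨(mul_lt_mul_iff_right₀ hE).2 (Real.rpow_lt_rpow ht2.le ht he), ?_⟩
    rw [lt_div_iff₀ ht1] at h2
    have hlt : lamN N - lam1 < (2 : ℝ) ^ c * (lamN N - lam2) := by
      calc lamN N - lam1 = (2 : ℝ) ^ c * ((2 : ℝ) ^ (-c) * (lamN N - lam1)) := by
            rw [← mul_assoc, mul_comm ((2:ℝ)^c), hcc, one_mul]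
        _ < (2 : ℝ) ^ c * (lamN N - lam2) := (mul_lt_mul_iff_right₀ h2c).2 h2
    have key : 2 * (E * (lamN N - lam2) ^ e) = E * (((2 : ℝ) ^ c * (lamN N - lam2)) ^ e) := by
      rw [Real.mul_rpow h2c.le ht2.le, ← Real.rpow_mul (by norm_num : (0 : ℝ) ≤ 2), hce,
        Real.rpow_one]
      ring
    rw [key, mul_lt_mul_iff_right₀ hE]
    exact Real.rpow_lt_rpow ht1.le hlt he
end
end

section
/- Let A,B>0 and θ≥2, and for ν>0 define Σ_ν = {σ>0 : A·σ^{2/2*_s} < σ + B·ν·σ^{θ/2*_s}}. Then for every ε∈(0,1) there exists ν̃>0 such that for every 0<ν<ν̃, every σ∈Σ_ν satisfies σ > (1−ε)·A^{(N−s)/(2−s)}. -/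
open MeasureTheory Filter Metric
open scoped RealInnerProductSpace ENNReal Topology

noncomputable section

theorem statement8
    (N : ℕ) (hN : 3 ≤ N) (s : ℝ) (hs0 : 0 ≤ s) (hs2 : s < 2)
    (A B θ : ℝ) (hA : 0 < A) (hB : 0 < B) (hθ : 2 ≤ θ) :
    ∀ ε : ℝ, 0 < ε → ε < 1 → ∃ ν₀ : ℝ, 0 < ν₀ ∧ ∀ ν : ℝ, 0 < ν → ν < ν₀ →
      ∀ σ : ℝ, 0 < σ →
        A * σ ^ (2 / twoStar N s) < σ + B * ν * σ ^ (θ / twoStar N s) →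
        (1 - ε) * A ^ (((N : ℝ) - s) / (2 - s)) < σ := by
  intro ε hε hε1
  have hN2 : (0:ℝ) < (N:ℝ) - 2 := by
    have : (3:ℝ) ≤ (N:ℝ) := by exact_mod_cast hN
    linarith
  have hNs : (0:ℝ) < (N:ℝ) - s := by linarith
  have ht : 0 < twoStar N s := by unfold twoStar; positivity
  set q : ℝ := 2 / twoStar N s with hqdef
  have hq : q = ((N:ℝ)-2)/((N:ℝ)-s) := by
    rw [hqdef]; unfold twoStar; field_simp
  have hq0 : 0 < q := by rw [hq]; positivity
  have hq1 : q < 1 := by rw [hq, div_lt_one hNs]; linarith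
  have h1q : 1 - q = (2-s)/((N:ℝ)-s) := by rw [hq]; field_simp; ring
  set M : ℝ := (1-ε) * A ^ (((N:ℝ)-s)/(2-s)) with hMdef
  have hM : 0 < M := mul_pos (by linarith) (Real.rpow_pos_of_pos hA _)
  have hMpow : M ^ (1-q) = (1-ε)^(1-q) * A := by
    rw [hMdef, Real.mul_rpow (by linarith) (Real.rpow_pos_of_pos hA _).le,
      ← Real.rpow_mul hA.le]
    congr 1
    have : ((N:ℝ)-s)/(2-s) * (1-q) = 1 := by
      rw [h1q]; field_simp; exact div_self (ne_of_gt (by linarith))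
    rw [this, Real.rpow_one]
  have hlt1 : (1-ε)^(1-q) < 1 :=
    Real.rpow_lt_one (by linarith) (by linarith) (by linarith)
  set c : ℝ := A * (1 - (1-ε)^(1-q)) with hcdef
  have hc : 0 < c := mul_pos hA (by linarith)
  set e : ℝ := (θ - 2) / twoStar N s with hedef
  have he : 0 ≤ e := div_nonneg (by linarith) ht.le
  have hMe : 0 < M ^ e := Real.rpow_pos_of_pos hM e
  refine ⟨c / (B * M ^ e), by positivity, ?_⟩
  intro ν hν hνlt σ hσ hyp
  by_contra hcon
  push_neg at hcon
  have hσM : σ ≤ M := hcon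
  have hσq : 0 < σ ^ q := Real.rpow_pos_of_pos hσ q
  have key1 : σ ≤ σ ^ q * ((1-ε)^(1-q) * A) := by
    calc σ = σ ^ q * σ ^ (1-q) := by
          rw [← Real.rpow_add hσ]; simp
      _ ≤ σ ^ q * M ^ (1-q) := by
          have := Real.rpow_le_rpow hσ.le hσM (by linarith : (0:ℝ) ≤ 1-q)
          exact mul_le_mul_of_nonneg_left this hσq.le
      _ = _ := by rw [hMpow]
  have key2 : σ ^ (θ / twoStar N s) ≤ σ ^ q * M ^ e := by
    have hsum : θ / twoStar N s = q + e := by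
      rw [hqdef, hedef, ← add_div]; ring_nf
    rw [hsum, Real.rpow_add hσ]
    exact mul_le_mul_of_nonneg_left (Real.rpow_le_rpow hσ.le hσM he) hσq.le
  have hBν : B * ν * (M ^ e) < c := by
    rw [lt_div_iff₀ (by positivity)] at hνlt
    nlinarith
  have hlast : σ + B * ν * σ ^ (θ / twoStar N s) < σ ^ q * A := by
    have h2 : B * ν * σ ^ (θ / twoStar N s) ≤ B * ν * (σ ^ q * M ^ e) :=
      mul_le_mul_of_nonneg_left key2 (by positivity)
    nlinarith
  have hAσ : σ ^ q * A = A * σ ^ q := by ring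
  linarith
end
end

section
/- Let N≥3 be an integer, s∈(0,2), λ∈(0,Λ_N) and μ>0. The function z_μ^{λ,s} is smooth and strictly positive on ℝ^N∖{0} and satisfies, pointwise for every x∈ℝ^N∖{0}, the equation −Δz_μ^{λ,s}(x) − λ·z_μ^{λ,s}(x)/|x|² = (z_μ^{λ,s}(x))^{2*_s−1}/|x|^s. -/
open MeasureTheory Filter Metric
open scoped RealInnerProductSpace ENNReal Topology

noncomputable section

/-- The Laplacian: sum of the second partial derivatives. -/
def laplacian (N : ℕ) (f : Eucl N → ℝ) (x : Eucl N) : ℝ :=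
  ∑ i : Fin N, fderiv ℝ (fun y => fderiv ℝ f y (EuclideanSpace.single i 1)) x
    (EuclideanSpace.single i 1)



/-- Basic building block `t ↦ k t^ε (1+m t^d)^γ`. -/
def Bf (m d k ε γ : ℝ) : ℝ → ℝ := fun t => k * t ^ ε * (1 + m * t ^ d) ^ γ

lemma hasDerivAt_Bf (m d k ε γ t : ℝ) (hm : 0 ≤ m) (ht : 0 < t) :
    HasDerivAt (Bf m d k ε γ)
      (Bf m d (k * ε) (ε - 1) γ t + Bf m d (k * γ * (m * d)) (ε + d - 1) (γ - 1) t) t := by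
  have hP : 0 < 1 + m * t ^ d := by positivity
  have h1 : HasDerivAt (fun u : ℝ => u ^ ε) (ε * t ^ (ε - 1)) t :=
    Real.hasDerivAt_rpow_const (Or.inl ht.ne')
  have h2 : HasDerivAt (fun u : ℝ => 1 + m * u ^ d) (m * (d * t ^ (d - 1))) t :=
    ((Real.hasDerivAt_rpow_const (Or.inl ht.ne')).const_mul m).const_add 1
  have h3 : HasDerivAt (fun y : ℝ => y ^ γ) (γ * (1 + m * t ^ d) ^ (γ - 1)) (1 + m * t ^ d) :=
    Real.hasDerivAt_rpow_const (Or.inl hP.ne')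
  have h4 : HasDerivAt (fun u : ℝ => (1 + m * u ^ d) ^ γ)
      (γ * (1 + m * t ^ d) ^ (γ - 1) * (m * (d * t ^ (d - 1)))) t := by have := h3.comp t h2; exact this
  have h5 := (h1.const_mul k).mul h4
  refine h5.congr_deriv ?_
  have hsplit : t ^ (ε + d - 1) = t ^ ε * t ^ (d - 1) := by
    rw [show ε + d - 1 = ε + (d - 1) by ring, Real.rpow_add ht]
  unfold Bf
  rw [hsplit]; ring

lemma rpow_split (t : ℝ) (ht : 0 < t) (α β γ : ℝ) (h : α = β + γ) :
    t ^ α = t ^ β * t ^ γ := by rw [h, Real.rpow_add ht]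

def Gf (m d K e c : ℝ) : ℝ → ℝ := Bf m d K e (-c)

def Gf1 (m d K e c : ℝ) : ℝ → ℝ := fun t =>
  Bf m d (K * e) (e - 1) (-c) t + Bf m d (K * (-c) * (m * d)) (e + d - 1) (-c - 1) t

def Gf2 (m d K e c : ℝ) : ℝ → ℝ := fun t =>
  (Bf m d (K * e * (e - 1)) (e - 1 - 1) (-c) t
    + Bf m d (K * e * (-c) * (m * d)) (e - 1 + d - 1) (-c - 1) t)
  + (Bf m d (K * (-c) * (m * d) * (e + d - 1)) (e + d - 1 - 1) (-c - 1) t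
    + Bf m d (K * (-c) * (m * d) * (-c - 1) * (m * d)) (e + d - 1 + d - 1) (-c - 1 - 1) t)

lemma hasDerivAt_Gf (m d K e c t : ℝ) (hm : 0 ≤ m) (ht : 0 < t) :
    HasDerivAt (Gf m d K e c) (Gf1 m d K e c t) t :=
  hasDerivAt_Bf m d K e (-c) t hm ht

lemma hasDerivAt_Gf1 (m d K e c t : ℝ) (hm : 0 ≤ m) (ht : 0 < t) :
    HasDerivAt (Gf1 m d K e c) (Gf2 m d K e c t) t := by
  exact (hasDerivAt_Bf m d (K * e) (e - 1) (-c) t hm ht).add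
    (hasDerivAt_Bf m d (K * (-c) * (m * d)) (e + d - 1) (-c - 1) t hm ht)

lemma main_ode (n s σ t K m e c d lam A : ℝ)
    (hn : 3 ≤ n) (hs0 : 0 < s) (hs2 : s < 2) (ht : 0 < t) (hm : 0 < m)
    (he : e = -(((n - 2) / 2 - σ) / 2)) (hc : c = (n - 2) / (2 - s))
    (hd : d = σ * (2 - s) / (n - 2))
    (hlam : lam = ((n - 2) / 2) ^ 2 - σ ^ 2) (hA : A = 4 * σ ^ 2 * (n - s) / (n - 2)) :
    4 * t * Gf2 m d K e c t + 2 * n * Gf1 m d K e c t + lam * Gf m d K e c t / t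
      + K * A * m * (t ^ (e - 1) * t ^ d) * (1 + m * t ^ d) ^ (-c - 2) = 0 := by
  have hP : 0 < 1 + m * t ^ d := by positivity
  have hn2 : (n - 2) ≠ 0 := by intro h; rw [sub_eq_zero] at h; linarith [h ▸ hn]
  have h2s : (2 - s) ≠ 0 := by intro h; linarith [sub_eq_zero.mp h]
  have r1 : t ^ e = t ^ (e - 1) * t := by
    rw [rpow_split t ht e (e - 1) 1 (by ring), Real.rpow_one]
  have r2 : t ^ (e + d - 1) = t ^ (e - 1) * t ^ d := rpow_split t ht _ _ _ (by ring)
  have r3 : t ^ (e - 1 - 1) = t ^ (e - 1) * t⁻¹ := by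
    rw [rpow_split t ht _ (e - 1) (-1) (by ring), Real.rpow_neg_one]
  have r4 : t ^ (e - 1 + d - 1) = t ^ (e - 1) * t ^ d * t⁻¹ := by
    rw [rpow_split t ht _ (e - 1 + d) (-1) (by ring), rpow_split t ht (e - 1 + d) (e - 1) d rfl,
      Real.rpow_neg_one]
  have r5 : t ^ (e + d - 1 - 1) = t ^ (e - 1) * t ^ d * t⁻¹ := by
    rw [rpow_split t ht _ (e - 1 + d) (-1) (by ring), rpow_split t ht (e - 1 + d) (e - 1) d rfl,
      Real.rpow_neg_one]
  have r6 : t ^ (e + d - 1 + d - 1) = t ^ (e - 1) * t ^ d * t ^ d * t⁻¹ := by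
    rw [rpow_split t ht _ (e - 1 + d + d) (-1) (by ring),
      rpow_split t ht (e - 1 + d + d) (e - 1 + d) d rfl,
      rpow_split t ht (e - 1 + d) (e - 1) d rfl, Real.rpow_neg_one]
  have q0 : (1 + m * t ^ d) ^ (-c) = (1 + m * t ^ d) ^ (-c - 2) * ((1 + m * t ^ d) * (1 + m * t ^ d)) := by
    rw [rpow_split _ hP (-c) (-c - 2) 2 (by ring), show ((2:ℝ)) = ((2:ℕ):ℝ) by norm_num,
      Real.rpow_natCast]
    ring
  have q1 : (1 + m * t ^ d) ^ (-c - 1) = (1 + m * t ^ d) ^ (-c - 2) * (1 + m * t ^ d) := by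
    rw [rpow_split _ hP (-c - 1) (-c - 2) 1 (by ring), Real.rpow_one]
  have q2 : (1 + m * t ^ d) ^ (-c - 1 - 1) = (1 + m * t ^ d) ^ (-c - 2) := by
    rw [show -c - 1 - 1 = -c - 2 by ring]
  unfold Gf2 Gf1 Gf Bf
  rw [r3, r4, r5, r6, r2, r1, q0, q1, q2]
  subst he hc hd hlam hA
  field_simp
  ring

lemma rhs_eq (n s σ μ t A e c d K m p : ℝ)
    (hn : 3 ≤ n) (hs0 : 0 < s) (hs2 : s < 2) (hσ : 0 < σ) (hμ : 0 < μ) (ht : 0 < t)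
    (hA : 0 < A)
    (he : e = -(((n - 2) / 2 - σ) / 2)) (hc : c = (n - 2) / (2 - s))
    (hd : d = σ * (2 - s) / (n - 2))
    (hK : K = A ^ ((n - 2) / (2 * (2 - s))) * μ ^ (-σ))
    (hm : m = μ ^ (-(2 * σ * (2 - s) / (n - 2))))
    (hp : p = 2 * (n - s) / (n - 2)) :
    (Gf m d K e c t) ^ (p - 1) / t ^ (s / 2)
      = K * A * m * (t ^ (e - 1) * t ^ d) * (1 + m * t ^ d) ^ (-c - 2) := by
  have hn2 : (n - 2) ≠ 0 := by intro h; rw [sub_eq_zero] at h; linarith [h ▸ hn]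
  have h2s : (2 - s) ≠ 0 := by intro h; linarith [sub_eq_zero.mp h]
  have hmpos : 0 < m := hm ▸ Real.rpow_pos_of_pos hμ _
  have hKpos : 0 < K := hK ▸ mul_pos (Real.rpow_pos_of_pos hA _) (Real.rpow_pos_of_pos hμ _)
  have hP : 0 < 1 + m * t ^ d := by positivity
  have htpos : 0 < t ^ e := Real.rpow_pos_of_pos ht _
  unfold Gf Bf
  rw [Real.mul_rpow (by positivity) (by positivity),
    Real.mul_rpow hKpos.le htpos.le, ← Real.rpow_mul ht.le, ← Real.rpow_mul hP.le]
  have hE : e * (p - 1) = (e - 1) + d + s / 2 := by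
    subst he hd hp; field_simp; ring
  have hCc : -c * (p - 1) = -c - 2 := by
    subst hc hp; field_simp; ring
  have hKp : K ^ (p - 1) = K * A * m := by
    rw [rpow_split K hKpos (p - 1) (p - 2) 1 (by ring), Real.rpow_one]
    have h1 : K ^ (p - 2) = A * m := by
      rw [hK, Real.mul_rpow (Real.rpow_pos_of_pos hA _).le (Real.rpow_pos_of_pos hμ _).le,
        ← Real.rpow_mul hA.le, ← Real.rpow_mul hμ.le,
        show (n - 2) / (2 * (2 - s)) * (p - 2) = 1 by subst hp; field_simp; ring,
        show -σ * (p - 2) = -(2 * σ * (2 - s) / (n - 2)) by subst hp; rw [show (2 * (n - s) / (n - 2)) - 2 = 2 * (2 - s) / (n - 2) by field_simp; ring]; ring,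
        Real.rpow_one, ← hm]
    rw [h1]; ring
  rw [hE, hCc, hKp, rpow_split t ht ((e - 1) + d + s / 2) ((e - 1) + d) (s / 2) (by ring),
    rpow_split t ht ((e - 1) + d) (e - 1) d rfl]
  have hts : t ^ (s / 2) ≠ 0 := (Real.rpow_pos_of_pos ht _).ne'
  field_simp


lemma z_eq (n s σ μ r A K m e c d : ℝ) (hn : 3 ≤ n) (hs0 : 0 < s) (hs2 : s < 2)
    (hσ : 0 < σ) (hμ : 0 < μ) (hr : 0 < r) (hA : 0 < A)
    (he : e = -(((n - 2) / 2 - σ) / 2)) (hd : d = σ * (2 - s) / (n - 2))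
    (hK : K = A ^ ((n - 2) / (2 * (2 - s))) * μ ^ (-σ))
    (hm : m = μ ^ (-(2 * σ * (2 - s) / (n - 2)))) :
    μ ^ (-((n - 2) / 2)) * (A ^ ((n - 2) / (2 * (2 - s)))
        / ((μ⁻¹ * r) ^ ((n - 2) / 2 - σ) * (1 + (μ⁻¹ * r) ^ (2 * d)) ^ c))
      = Gf m d K e c (r ^ 2) := by
  have hb1 : (μ⁻¹ * r) ^ ((n - 2) / 2 - σ)
      = μ ^ (-((n - 2) / 2 - σ)) * r ^ ((n - 2) / 2 - σ) := by
    rw [Real.mul_rpow (inv_nonneg.2 hμ.le) hr.le, Real.inv_rpow hμ.le,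
      ← Real.rpow_neg hμ.le]
  have hb2 : (μ⁻¹ * r) ^ (2 * d) = μ ^ (-(2 * d)) * r ^ (2 * d) := by
    rw [Real.mul_rpow (inv_nonneg.2 hμ.le) hr.le, Real.inv_rpow hμ.le,
      ← Real.rpow_neg hμ.le]
  have hsq : ∀ y : ℝ, ((r ^ 2) : ℝ) ^ y = r ^ (2 * y) := by
    intro y
    rw [← Real.rpow_natCast r 2, ← Real.rpow_mul hr.le]
    norm_num
  have hmm : μ ^ (-(2 * d)) = m := by
    rw [hm, hd]
    congr 1
    ring
  show _ = K * (r ^ 2) ^ e * (1 + m * (r ^ 2) ^ d) ^ (-c)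
  rw [hb1, hb2, hsq e, hsq d, hmm, hK]
  rw [show 2 * e = -((n - 2) / 2 - σ) by rw [he]; ring]
  have hr1 : (0:ℝ) < r ^ ((n - 2) / 2 - σ) := Real.rpow_pos_of_pos hr _
  have hr2 : r ^ (-((n - 2) / 2 - σ)) = (r ^ ((n - 2) / 2 - σ))⁻¹ := by
    rw [Real.rpow_neg hr.le]
  have hm0 : 0 < m := by rw [hm]; exact Real.rpow_pos_of_pos hμ _
  have hQ : (0:ℝ) < 1 + m * r ^ (2 * d) := by positivity
  have hQc : (1 + m * r ^ (2 * d)) ^ (-c) = ((1 + m * r ^ (2 * d)) ^ c)⁻¹ := by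
    rw [Real.rpow_neg hQ.le]
  have hμ1 : (0:ℝ) < μ ^ (-((n - 2) / 2 - σ)) := Real.rpow_pos_of_pos hμ _
  have hμsplit : μ ^ (-((n - 2) / 2)) = μ ^ (-σ) * μ ^ (-((n - 2) / 2 - σ)) := by
    rw [← Real.rpow_add hμ]
    congr 1
    ring
  rw [hr2, hQc, hμsplit]
  have hQ2 : (0:ℝ) < (1 + m * r ^ (2 * d)) ^ c := Real.rpow_pos_of_pos hQ _
  field_simp

theorem statement18
    (N : ℕ) (hN : 3 ≤ N) (s : ℝ) (hs0 : 0 < s) (hs2 : s < 2)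
    (lam : ℝ) (hl : 0 < lam) (hl' : lam < lamN N) (μ : ℝ) (hμ : 0 < μ) :
    ContDiffOn ℝ (⊤ : ℕ∞) (zMu N s lam μ) {x : Eucl N | x ≠ 0} ∧
    ∀ x : Eucl N, x ≠ 0 →
      0 < zMu N s lam μ x ∧
      - laplacian N (zMu N s lam μ) x - lam * zMu N s lam μ x / ‖x‖ ^ 2 =
        (zMu N s lam μ x) ^ (twoStar N s - 1) / ‖x‖ ^ s := by
  have hn3 : (3:ℝ) ≤ (N:ℝ) := by exact_mod_cast hN
  have hn2 : (0:ℝ) < (N:ℝ) - 2 := by linarith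
  have hs2' : (0:ℝ) < 2 - s := by linarith
  have hΛ : lamN N = (((N:ℝ) - 2) / 2) ^ 2 := by rw [lamN]; ring
  obtain ⟨σ, hσdef⟩ : ∃ x : ℝ, x = Real.sqrt (lamN N - lam) := ⟨_, rfl⟩
  have hσpos : 0 < σ := hσdef ▸ Real.sqrt_pos.2 (by linarith)
  have hσ2 : σ ^ 2 = lamN N - lam := by rw [hσdef]; exact Real.sq_sqrt (by linarith)
  have hlamσ : lam = (((N:ℝ) - 2) / 2) ^ 2 - σ ^ 2 := by rw [hσ2, hΛ]; ring
  have hσlt : σ < ((N:ℝ) - 2) / 2 := by nlinarith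
  have hsqrtΛ : Real.sqrt (lamN N) = ((N:ℝ) - 2) / 2 := by
    rw [hΛ, Real.sqrt_sq (by linarith)]
  have ha : aLam N lam = ((N:ℝ) - 2) / 2 - σ := by rw [aLam, hsqrtΛ, ← hσdef]
  obtain ⟨e, hedef⟩ : ∃ x : ℝ, x = -(((((N:ℝ)) - 2) / 2 - σ) / 2) := ⟨_, rfl⟩
  obtain ⟨c, hcdef⟩ : ∃ x : ℝ, x = ((N:ℝ) - 2) / (2 - s) := ⟨_, rfl⟩
  obtain ⟨d, hddef⟩ : ∃ x : ℝ, x = σ * (2 - s) / ((N:ℝ) - 2) := ⟨_, rfl⟩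
  obtain ⟨A, hAdef⟩ : ∃ x : ℝ, x = 4 * σ ^ 2 * ((N:ℝ) - s) / ((N:ℝ) - 2) := ⟨_, rfl⟩
  have hApos : 0 < A := by rw [hAdef]; apply div_pos (by nlinarith) hn2
  have hAc : Aconst N s lam = A := by
    rw [Aconst, hsqrtΛ, ← hσ2, hAdef]; field_simp; ring
  obtain ⟨K, hKdef⟩ : ∃ x : ℝ, x = A ^ (((N:ℝ) - 2) / (2 * (2 - s))) * μ ^ (-σ) := ⟨_, rfl⟩
  have hKpos : 0 < K := hKdef ▸ mul_pos (Real.rpow_pos_of_pos hApos _) (Real.rpow_pos_of_pos hμ _)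
  obtain ⟨m, hmdef⟩ : ∃ x : ℝ, x = μ ^ (-(2 * σ * (2 - s) / ((N:ℝ) - 2))) := ⟨_, rfl⟩
  have hmpos : 0 < m := hmdef ▸ Real.rpow_pos_of_pos hμ _
  -- the radial profile
  have hzG : ∀ y : Eucl N, y ≠ 0 → zMu N s lam μ y = Gf m d K e c (‖y‖ ^ 2) := by
    intro y hy
    have hr : 0 < ‖y‖ := norm_pos_iff.2 hy
    have hμi : ‖μ⁻¹ • y‖ = μ⁻¹ * ‖y‖ := by
      rw [norm_smul, Real.norm_eq_abs, abs_of_pos (inv_pos.2 hμ)]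
    rw [zMu, z1, hμi, hAc, ha]
    rw [show (2 - s) * (1 - 2 * (((N:ℝ) - 2) / 2 - σ) / ((N:ℝ) - 2)) = 2 * d by
      rw [hddef]; field_simp; ring]
    rw [show ((N:ℝ) - 2) / (2 - s) = c from hcdef.symm]
    exact z_eq ((N:ℝ)) s σ μ (‖y‖) A K m e c d hn3 hs0 hs2 hσpos hμ hr hApos hedef hddef
      hKdef hmdef
  have hGpos : ∀ y : Eucl N, y ≠ 0 → 0 < Gf m d K e c (‖y‖ ^ 2) := by
    intro y hy
    have hr2 : (0:ℝ) < ‖y‖ ^ 2 := by have := norm_pos_iff.2 hy; positivity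
    show 0 < K * (‖y‖ ^ 2) ^ e * (1 + m * (‖y‖ ^ 2) ^ d) ^ (-c)
    have h1 : (0:ℝ) < (‖y‖ ^ 2) ^ e := Real.rpow_pos_of_pos hr2 _
    have h2 : (0:ℝ) < 1 + m * (‖y‖ ^ 2) ^ d := by positivity
    have h3 : (0:ℝ) < (1 + m * (‖y‖ ^ 2) ^ d) ^ (-c) := Real.rpow_pos_of_pos h2 _
    positivity
  -- first derivatives
  have hDz : ∀ y : Eucl N, y ≠ 0 → HasFDerivAt (zMu N s lam μ)
      ((Gf1 m d K e c (‖y‖ ^ 2) * 2) • innerSL ℝ y) y := by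
    intro y hy
    have hy2 : (0:ℝ) < ‖y‖ ^ 2 := by have := norm_pos_iff.2 hy; positivity
    have h1 := (hasDerivAt_Gf m d K e c _ hmpos.le hy2).comp_hasFDerivAt y
      (hasStrictFDerivAt_norm_sq y).hasFDerivAt
    have h2 : zMu N s lam μ =ᶠ[nhds y] (fun z : Eucl N => Gf m d K e c (‖z‖ ^ 2)) :=
      Filter.eventuallyEq_of_mem (compl_singleton_mem_nhds hy) (fun z hz => hzG z hz)
    have h3 := h1.congr_of_eventuallyEq h2
    refine h3.congr_fderiv ?_
    ext v
    simp [mul_comm]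
    ring
  have hfd : ∀ (y : Eucl N), y ≠ 0 → ∀ i : Fin N,
      fderiv ℝ (zMu N s lam μ) y (EuclideanSpace.single i 1)
        = Gf1 m d K e c (‖y‖ ^ 2) * 2 * y i := by
    intro y hy i
    rw [(hDz y hy).fderiv]
    simp [EuclideanSpace.inner_single_right]
  constructor
  · -- smoothness
    intro x hx
    have hx' : x ≠ 0 := hx
    have hx2 : (0:ℝ) < ‖x‖ ^ 2 := by have := norm_pos_iff.2 hx'; positivity
    apply ContDiffAt.contDiffWithinAt
    have h1 : ContDiffAt ℝ (⊤:ℕ∞) (fun t : ℝ => t ^ e) (‖x‖ ^ 2) :=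
      Real.contDiffAt_rpow_const_of_ne hx2.ne'
    have h2 : ContDiffAt ℝ (⊤:ℕ∞) (fun t : ℝ => 1 + m * t ^ d) (‖x‖ ^ 2) :=
      contDiffAt_const.add (contDiffAt_const.mul (Real.contDiffAt_rpow_const_of_ne hx2.ne'))
    have hPpos : (0:ℝ) < 1 + m * (‖x‖ ^ 2) ^ d := by
      have := Real.rpow_pos_of_pos hx2 d; positivity
    have h3 : ContDiffAt ℝ (⊤:ℕ∞) (fun y : ℝ => y ^ (-c)) (1 + m * (‖x‖ ^ 2) ^ d) :=
      Real.contDiffAt_rpow_const_of_ne hPpos.ne'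
    have hGsm : ContDiffAt ℝ (⊤:ℕ∞) (Gf m d K e c) (‖x‖ ^ 2) := by
      show ContDiffAt ℝ (⊤:ℕ∞) (fun t : ℝ => K * t ^ e * (1 + m * t ^ d) ^ (-c)) (‖x‖ ^ 2)
      exact (contDiffAt_const.mul h1).mul (by have := ContDiffAt.comp (‖x‖ ^ 2) h3 h2; exact this)
    have hcomp := hGsm.comp x ((contDiff_norm_sq (𝕜 := ℝ) (E := Eucl N)).contDiffAt)
    apply hcomp.congr_of_eventuallyEq
    exact Filter.eventuallyEq_of_mem (compl_singleton_mem_nhds hx') (fun z hz => hzG z hz)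
  · -- pointwise
    intro x hx
    have hx2 : (0:ℝ) < ‖x‖ ^ 2 := by have := norm_pos_iff.2 hx; positivity
    refine ⟨by rw [hzG x hx]; exact hGpos x hx, ?_⟩
    -- second derivatives
    have hsecond : ∀ i : Fin N,
        fderiv ℝ (fun y => fderiv ℝ (zMu N s lam μ) y (EuclideanSpace.single i 1)) x
          (EuclideanSpace.single i 1)
        = Gf1 m d K e c (‖x‖ ^ 2) * 2 + 4 * Gf2 m d K e c (‖x‖ ^ 2) * (x i * x i) := by
      intro i
      have hev : (fun y => fderiv ℝ (zMu N s lam μ) y (EuclideanSpace.single i 1))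
          =ᶠ[nhds x] (fun y => Gf1 m d K e c (‖y‖ ^ 2) * 2 * y i) :=
        Filter.eventuallyEq_of_mem (compl_singleton_mem_nhds hx) (fun z hz => hfd z hz i)
      rw [hev.fderiv_eq]
      have hA1 := (hasDerivAt_Gf1 m d K e c _ hmpos.le hx2).comp_hasFDerivAt x
        (hasStrictFDerivAt_norm_sq x).hasFDerivAt
      have hA1' := hA1.mul_const (2:ℝ)
      have hA2 : HasFDerivAt (fun y : Eucl N => y i)
          (EuclideanSpace.proj (𝕜 := ℝ) i) x := by
        exact (EuclideanSpace.proj (𝕜 := ℝ) i).hasFDerivAt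
      have hmul' : HasFDerivAt (fun y : Eucl N => Gf1 m d K e c (‖y‖ ^ 2) * 2 * y i)
          ((Gf1 m d K e c (‖x‖ ^ 2) * 2) • (EuclideanSpace.proj (𝕜 := ℝ) i)
            + x i • ((2:ℝ) • (Gf2 m d K e c (‖x‖ ^ 2) • (2 • innerSL ℝ x)))) x :=
        hA1'.mul hA2
      rw [hmul'.fderiv]
      simp [EuclideanSpace.inner_single_right, EuclideanSpace.single_apply]
      ring
    have hsum : ∑ i : Fin N, x i * x i = ‖x‖ ^ 2 := by
      rw [← real_inner_self_eq_norm_sq]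
      simp only [PiLp.inner_apply, RCLike.inner_apply, conj_trivial]
    have hlap : laplacian N (zMu N s lam μ) x
        = 4 * ‖x‖ ^ 2 * Gf2 m d K e c (‖x‖ ^ 2) + 2 * (N:ℝ) * Gf1 m d K e c (‖x‖ ^ 2) := by
      unfold laplacian
      rw [Finset.sum_congr rfl (fun i _ => hsecond i)]
      rw [Finset.sum_add_distrib, Finset.sum_const, ← Finset.mul_sum, hsum]
      simp [Finset.card_univ]
      ring
    have hxs : ‖x‖ ^ s = (‖x‖ ^ 2) ^ (s / 2) := by
      rw [← Real.rpow_natCast ‖x‖ 2, ← Real.rpow_mul (norm_nonneg x)]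
      norm_num
      congr 1
      ring
    have htwo : twoStar N s = 2 * ((N:ℝ) - s) / ((N:ℝ) - 2) := rfl
    have h1 := main_ode ((N:ℝ)) s σ (‖x‖ ^ 2) K m e c d lam A hn3 hs0 hs2 hx2 hmpos
      hedef hcdef hddef hlamσ hAdef
    have h2 := rhs_eq ((N:ℝ)) s σ μ (‖x‖ ^ 2) A e c d K m (twoStar N s) hn3 hs0 hs2
      hσpos hμ hx2 hApos hedef hcdef hddef hKdef hmdef htwo
    rw [hlap, hzG x hx, hxs, h2]
    linarith [h1]
end
end
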